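/- For every measurable g : [0,∞) → [0,∞], ∫_{y ∈ ℝ²} g(|y|) ( ∫_{a ∈ H⁺(0,y)} ∫_{b ∈ ℝ² : [a,b] ∩ [0,y] ≠ ∅} g(|a−b|) db da ) dy = 4π ( ∫_0^∞ r² g(r) dr )², where for y ≠ 0 the middle integral is over the open half-plane H⁺(0,y) and the innermost over all b such that the segment [a,b] meets the segment from the origin to y (all integrals with respect to Lebesgue measure). -/

import Mathlib

open MeasureTheory Set Real
open scoped ENNReal

/-- The open half-plane to the left of the directed line from `a` to `b`. -/
def Hplus (a b : EuclideanSpace ℝ (Fin 2)) : Set (EuclideanSpace ℝ (Fin 2)) :=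
  {c | 0 < (b 0 - a 0) * (c 1 - a 1) - (b 1 - a 1) * (c 0 - a 0)}

noncomputable section StmtAux

namespace Stmt1Aux

/-! ### Basic geometry in `ℝ × ℝ` -/

def nrm (p : ℝ × ℝ) : ℝ := Real.sqrt (p.1 ^ 2 + p.2 ^ 2)

def crs (w c : ℝ × ℝ) : ℝ := w.1 * c.2 - w.2 * c.1

def Tmap (w α : ℝ × ℝ) (p : ℝ × ℝ) : ℝ × ℝ := α + p.2 • (p.1 • w - α)

def Ig (g : ℝ → ℝ≥0∞) : ℝ≥0∞ := ∫⁻ r in Ioi (0:ℝ), ENNReal.ofReal (r ^ 2) * g r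

lemma nrm_smul (t : ℝ) (p : ℝ × ℝ) : nrm (t • p) = |t| * nrm p := by
  simp only [nrm, Prod.smul_fst, Prod.smul_snd, smul_eq_mul, mul_pow]
  rw [← mul_add, Real.sqrt_mul (sq_nonneg t), Real.sqrt_sq_eq_abs]

lemma nrm_polar (r θ : ℝ) : nrm (r * Real.cos θ, r * Real.sin θ) = |r| := by
  simp only [nrm, mul_pow]
  rw [← mul_add, add_comm, Real.sin_sq_add_cos_sq, mul_one, Real.sqrt_sq_eq_abs]

lemma nrm_neg (p : ℝ × ℝ) : nrm (-p) = nrm p := by simp [nrm]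

lemma crs_add (w a b : ℝ × ℝ) : crs w (a + b) = crs w a + crs w b := by
  simp [crs]; ring

lemma crs_smul (w : ℝ × ℝ) (t : ℝ) (a : ℝ × ℝ) : crs w (t • a) = t * crs w a := by
  simp [crs]; ring

lemma crs_self (w : ℝ × ℝ) : crs w w = 0 := by simp [crs]; ring

lemma continuous_nrm : Continuous nrm :=
  Real.continuous_sqrt.comp ((continuous_fst.pow 2).add (continuous_snd.pow 2))

lemma continuous_crs (w : ℝ × ℝ) : Continuous (crs w) :=
  ((continuous_const.mul continuous_snd).sub (continuous_const.mul continuous_fst))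

/-! ### Polar coordinates for the Lebesgue integral -/

theorem lintegral_polar (f : ℝ × ℝ → ℝ≥0∞) :
    ∫⁻ p, f p = ∫⁻ q in Set.Ioi (0:ℝ) ×ˢ Set.Ioo (-π) π,
      ENNReal.ofReal q.1 * f (q.1 * Real.cos q.2, q.1 * Real.sin q.2) := by
  set B : ℝ × ℝ → ℝ × ℝ →L[ℝ] ℝ × ℝ := fun p =>
    LinearMap.toContinuousLinearMap (Matrix.toLin (Module.Basis.finTwoProd ℝ) (Module.Basis.finTwoProd ℝ)
      !![Real.cos p.2, -p.1 * Real.sin p.2; Real.sin p.2, p.1 * Real.cos p.2])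
  have hder : ∀ q ∈ polarCoord.target, HasFDerivWithinAt polarCoord.symm (B q)
      polarCoord.target q := fun q _ => (hasFDerivAt_polarCoord_symm q).hasFDerivWithinAt
  have B_det : ∀ p, (B p).det = p.1 := by
    intro p
    conv_rhs => rw [← one_mul p.1, ← cos_sq_add_sin_sq p.2]
    simp only [B, neg_mul, LinearMap.det_toContinuousLinearMap, LinearMap.det_toLin,
      Matrix.det_fin_two_of, sub_neg_eq_add]
    ring
  have hinj : InjOn polarCoord.symm polarCoord.target := polarCoord.symm.injOn
  calc ∫⁻ p, f p = ∫⁻ p in polarCoord.source, f p := by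
        rw [← setLIntegral_univ]
        exact setLIntegral_congr polarCoord_source_ae_eq_univ.symm
    _ = ∫⁻ p in polarCoord.symm '' polarCoord.target, f p := by
        rw [polarCoord.symm_image_target_eq_source]
    _ = ∫⁻ q in polarCoord.target, ENNReal.ofReal |(B q).det| * f (polarCoord.symm q) := by
        exact lintegral_image_eq_lintegral_abs_det_fderiv_mul volume
          polarCoord.open_target.measurableSet hder hinj f
    _ = _ := by
        refine setLIntegral_congr_fun polarCoord.open_target.measurableSet
          (fun q hq => ?_)
        rw [B_det, abs_of_pos hq.1]
        rfl

/-! ### Scalar integrals -/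

lemma sinmax_periodic : Function.Periodic (fun x => max (Real.sin x) 0) (2 * π) :=
  fun x => by simp [Real.sin_periodic x]

lemma integral_sinmax : ∫ x in (-π)..π, max (Real.sin x) 0 = 2 := by
  have hcont : Continuous fun x => max (Real.sin x) 0 :=
    Real.continuous_sin.max continuous_const
  have h1 : (∫ x in (-π)..(0:ℝ), max (Real.sin x) 0) = 0 := by
    rw [intervalIntegral.integral_congr (g := fun _ => (0:ℝ)), intervalIntegral.integral_zero]
    intro x hx
    rw [uIcc_of_le (by linarith [Real.pi_pos] : -π ≤ (0:ℝ))] at hx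
    exact max_eq_right (Real.sin_nonpos_of_nonpos_of_neg_pi_le hx.2 hx.1)
  have h2 : (∫ x in (0:ℝ)..π, max (Real.sin x) 0) = 2 := by
    rw [intervalIntegral.integral_congr (g := Real.sin)]
    · rw [integral_sin]; norm_num
    · intro x hx
      rw [uIcc_of_le Real.pi_nonneg] at hx
      exact max_eq_left (Real.sin_nonneg_of_nonneg_of_le_pi hx.1 hx.2)
  have := intervalIntegral.integral_add_adjacent_intervals
    (μ := volume) (a := -π) (b := 0) (c := π)
    (hcont.intervalIntegrable _ _) (hcont.intervalIntegrable _ _)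
  rw [h1, h2, zero_add] at this
  exact this.symm

lemma lintegral_sin_shift (φ : ℝ) :
    ∫⁻ θ in Ioo (-π) π, ENNReal.ofReal (Real.sin (θ - φ)) = 2 := by
  have hmax : ∀ θ : ℝ, ENNReal.ofReal (Real.sin (θ - φ))
      = ENNReal.ofReal (max (Real.sin (θ - φ)) 0) := by
    intro θ
    rcases le_total (Real.sin (θ - φ)) 0 with h | h
    · rw [max_eq_right h, ENNReal.ofReal_of_nonpos h, ENNReal.ofReal_zero]
    · rw [max_eq_left h]
  simp_rw [hmax]
  have hcont : Continuous fun θ => max (Real.sin (θ - φ)) 0 :=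
    (Real.continuous_sin.comp (continuous_id.sub continuous_const)).max continuous_const
  rw [← ofReal_integral_eq_lintegral_ofReal (f := fun θ => max (Real.sin (θ - φ)) 0)
      ((hcont.integrableOn_Icc (a := -π) (b := π)).mono_set Ioo_subset_Icc_self)
      (ae_of_all _ fun θ => le_max_right _ _)]
  have : (∫ θ in Ioo (-π) π, max (Real.sin (θ - φ)) 0) = 2 := by
    rw [← integral_Ioc_eq_integral_Ioo, ← intervalIntegral.integral_of_le (by linarith [Real.pi_pos])]
    rw [intervalIntegral.integral_comp_sub_right (fun x => max (Real.sin x) 0) φ]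
    have := sinmax_periodic.intervalIntegral_add_eq (-π - φ) (-π)
    rw [show -π - φ + 2 * π = π - φ by ring, show -π + 2*π = π by ring] at this
    rw [this]
    exact integral_sinmax
  rw [this]
  norm_num

lemma lintegral_Ioi_scale {c : ℝ} (hc : 0 < c) (f : ℝ → ℝ≥0∞) :
    ∫⁻ x in Ioi (0:ℝ), f (c * x) = ENNReal.ofReal c⁻¹ * ∫⁻ x in Ioi (0:ℝ), f x := by
  have hemb : MeasurableEmbedding (fun x : ℝ => c * x) :=
    (Homeomorph.mulLeft₀ c hc.ne').measurableEmbedding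
  have hmp : MeasurePreserving (fun x : ℝ => c * x)
      (ENNReal.ofReal c • volume) volume := by
    constructor
    · exact (measurable_const_mul c)
    · rw [Measure.map_smul, Real.map_volume_mul_left hc.ne']
      rw [smul_smul, ← ENNReal.ofReal_mul hc.le, abs_of_pos (inv_pos.2 hc),
        mul_inv_cancel₀ hc.ne', ENNReal.ofReal_one, one_smul]
  have := hmp.setLIntegral_comp_preimage_emb hemb f (Ioi 0)
  have hpre : (fun x : ℝ => c * x) ⁻¹' Ioi 0 = Ioi 0 := by
    ext x; simp [mul_pos_iff_of_pos_left, hc]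
  rw [hpre] at this
  rw [Measure.restrict_smul, lintegral_smul_measure] at this
  rw [← this, smul_eq_mul, ← mul_assoc, ← ENNReal.ofReal_mul (inv_nonneg.2 hc.le),
    inv_mul_cancel₀ hc.ne', ENNReal.ofReal_one, one_mul]

lemma lintegral_inv_sq_Ioi_one :
    ∫⁻ x in Ioi (1:ℝ), ENNReal.ofReal ((x ^ 2)⁻¹) = 1 := by
  have hcong : ∀ x ∈ Ioi (1:ℝ), ENNReal.ofReal ((x ^ 2)⁻¹) = ENNReal.ofReal (x ^ (-2:ℝ)) := by
    intro x hx
    rw [Real.rpow_neg (by linarith [mem_Ioi.1 hx] : (0:ℝ) ≤ x)]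
    norm_num [Real.rpow_natCast x 2]
  rw [setLIntegral_congr_fun measurableSet_Ioi hcong]
  rw [← ofReal_integral_eq_lintegral_ofReal
      (integrableOn_Ioi_rpow_of_lt (by norm_num) one_pos)
      ((ae_restrict_iff' measurableSet_Ioi).2 (ae_of_all _ fun x hx =>
        Real.rpow_nonneg (by linarith [mem_Ioi.1 hx]) _))]
  rw [integral_Ioi_rpow_of_lt (by norm_num) one_pos]
  norm_num

/-! ### Null lines -/

lemma line_null (u v : ℝ × ℝ) (s : Set ℝ) :
    volume ((fun t : ℝ => u + t • v) '' s) = 0 := by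
  have hsub : (fun t : ℝ => u + t • v) '' s
      ⊆ (fun x => -u + x) ⁻¹' (Submodule.span ℝ {v} : Set (ℝ × ℝ)) := by
    rintro _ ⟨t, -, rfl⟩
    simp only [mem_preimage, neg_add_cancel_left, SetLike.mem_coe]
    exact Submodule.smul_mem _ t (Submodule.mem_span_singleton_self v)
  refine measure_mono_null hsub ?_
  rw [measure_preimage_add]
  apply Measure.addHaar_submodule
  rcases eq_or_ne v 0 with rfl | hv
  · rw [Submodule.span_zero_singleton]
    exact bot_ne_top
  · intro h
    have h1 : Module.finrank ℝ (Submodule.span ℝ ({v} : Set (ℝ × ℝ))) = 1 :=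
      finrank_span_singleton hv
    rw [h, finrank_top] at h1
    rw [Module.finrank_prod, Module.finrank_self] at h1
    norm_num at h1

/-! ### The crossing set -/

lemma crossSet_eq (w α : ℝ × ℝ)
    (hα : ∀ s : ℝ, s ∈ Icc (0:ℝ) 1 → s • w ≠ α) :
    {β | (segment ℝ α β ∩ segment ℝ 0 w).Nonempty} = Tmap w α '' (Icc 0 1 ×ˢ Ici 1) := by
  ext β
  simp only [mem_setOf_eq, mem_image, Prod.exists, Tmap]
  constructor
  · rintro ⟨x, hxαβ, hx0w⟩
    rw [segment_eq_image'] at hxαβ hx0w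
    obtain ⟨t, ht, hxt⟩ := hxαβ
    obtain ⟨s, hs, hxs⟩ := hx0w
    simp only [zero_add, sub_zero] at hxs
    have ht0 : t ≠ 0 := by
      rintro rfl
      simp only [zero_smul, add_zero] at hxt
      exact hα s hs (hxs.trans hxt.symm)
    have ht0' : 0 < t := lt_of_le_of_ne ht.1 (Ne.symm ht0)
    refine ⟨s, t⁻¹, ⟨hs, (one_le_inv₀ ht0').2 ht.2⟩, ?_⟩
    have key : s • w - α = t • (β - α) := by
      rw [hxs, ← hxt]; simp
    rw [key, smul_smul, inv_mul_cancel₀ ht0, one_smul]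
    abel
  · rintro ⟨s, l, ⟨hs, hl⟩, rfl⟩
    have hl0 : (0:ℝ) < l := lt_of_lt_of_le one_pos hl
    refine ⟨s • w, ?_, ?_⟩
    · rw [segment_eq_image']
      refine ⟨l⁻¹, ⟨inv_nonneg.2 hl0.le, inv_le_one_of_one_le₀ hl⟩, ?_⟩
      show α + l⁻¹ • ((α + l • (s • w - α)) - α) = s • w
      rw [add_sub_cancel_left, smul_smul, inv_mul_cancel₀ hl0.ne', one_smul]
      abel
    · rw [segment_eq_image']
      exact ⟨s, hs, by simp⟩

/-! ### The Jacobian of `Tmap` -/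

def Dmap (w α : ℝ × ℝ) (q : ℝ × ℝ) : ℝ × ℝ →L[ℝ] ℝ × ℝ :=
  LinearMap.toContinuousLinearMap (Matrix.toLin (Module.Basis.finTwoProd ℝ) (Module.Basis.finTwoProd ℝ)
    !![q.2 * w.1, q.1 * w.1 - α.1; q.2 * w.2, q.1 * w.2 - α.2])

lemma hasFDerivAt_Tmap (w α q : ℝ × ℝ) : HasFDerivAt (Tmap w α) (Dmap w α q) q := by
  have h := (((hasFDerivAt_snd (𝕜 := ℝ) (p := q) (E := ℝ) (F := ℝ)).smul
      (((hasFDerivAt_fst (𝕜 := ℝ) (p := q) (E := ℝ) (F := ℝ)).smul_const w).sub_const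
        α))).const_add α
  refine h.congr_fderiv ?_
  symm
  rw [Dmap, Matrix.toLin_finTwoProd_toContinuousLinearMap]
  refine ContinuousLinearMap.ext fun p => ?_
  apply Prod.ext <;>
    simp [ContinuousLinearMap.smulRight_apply, Prod.smul_def, smul_eq_mul] <;> ring

lemma Dmap_det (w α q : ℝ × ℝ) : (Dmap w α q).det = -(q.2 * crs w α) := by
  simp only [Dmap, LinearMap.det_toContinuousLinearMap, LinearMap.det_toLin,
    Matrix.det_fin_two_of, crs]
  ring

lemma crs_Tmap (w α : ℝ × ℝ) (p : ℝ × ℝ) :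
    crs w (Tmap w α p) = (1 - p.2) * crs w α := by
  simp [Tmap, crs, Prod.smul_def, smul_eq_mul]; ring

lemma Tmap_injOn (w α : ℝ × ℝ) (hw : w ≠ 0) (hα : crs w α ≠ 0) :
    InjOn (Tmap w α) (Ioo (0:ℝ) 1 ×ˢ Ioi (1:ℝ)) := by
  rintro ⟨s, l⟩ ⟨-, hl⟩ ⟨s', l'⟩ ⟨-, hl'⟩ h
  have hc := congrArg (crs w) h
  rw [crs_Tmap, crs_Tmap] at hc
  have hll : l = l' := by
    have := mul_right_cancel₀ hα hc
    linarith
  subst hll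
  have hl0 : (l : ℝ) ≠ 0 := by simp only [mem_Ioi] at hl; intro h0; rw [h0] at hl; linarith
  simp only [Tmap, add_right_inj] at h
  have h2 := smul_right_injective (ℝ × ℝ) hl0 h
  have h3 : s • w = s' • w := by
    have := congrArg (· + α) h2
    simpa using this
  have hs : s = s' := smul_left_injective ℝ hw h3
  simp [hs]

/-! ### Change of variables in the inner integral -/

lemma binteg (w α : ℝ × ℝ) (hw : w ≠ 0) (hα : 0 < crs w α) (G : ℝ × ℝ → ℝ≥0∞) :
    ∫⁻ β in {β | (segment ℝ α β ∩ segment ℝ 0 w).Nonempty}, G β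
      = ∫⁻ q in Ioo (0:ℝ) 1 ×ˢ Ioi (1:ℝ),
          ENNReal.ofReal (q.2 * crs w α) * G (Tmap w α q) := by
  have hα' : ∀ s : ℝ, s ∈ Icc (0:ℝ) 1 → s • w ≠ α := by
    intro s _ h
    refine hα.ne' ?_
    rw [← h]
    simp only [crs, Prod.smul_fst, Prod.smul_snd, smul_eq_mul]
    ring
  rw [crossSet_eq w α hα']
  have himg : Tmap w α '' (Ioo 0 1 ×ˢ Ioi 1) ⊆ Tmap w α '' (Icc 0 1 ×ˢ Ici 1) :=
    image_mono (prod_mono Ioo_subset_Icc_self Ioi_subset_Ici_self)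
  have hbad : (Icc (0:ℝ) 1 ×ˢ Ici (1:ℝ)) \ (Ioo 0 1 ×ˢ Ioi 1)
      ⊆ ({(0:ℝ)} ×ˢ (univ : Set ℝ)) ∪ ({(1:ℝ)} ×ˢ (univ : Set ℝ))
        ∪ ((univ : Set ℝ) ×ˢ {(1:ℝ)}) := by
    rintro ⟨s, l⟩ ⟨⟨⟨hs0, hs1⟩, hl⟩, hn⟩
    simp only [mem_prod, mem_Ioo, mem_Ioi, not_and_or, not_and, not_lt] at hn
    simp only [mem_union, mem_prod, mem_singleton_iff, mem_univ, and_true, true_and]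
    rcases hn with hn | hn
    · rcases hn with hn | hn
      · exact Or.inl (Or.inl (le_antisymm hn hs0))
      · exact Or.inl (Or.inr (le_antisymm hs1 hn))
    · exact Or.inr (le_antisymm hn (mem_Ici.1 hl))
  have hline1 : ∀ c : ℝ, Tmap w α '' ({c} ×ˢ (univ : Set ℝ))
      ⊆ (fun t : ℝ => α + t • (c • w - α)) '' univ := by
    rintro c _ ⟨⟨s, l⟩, ⟨hs, -⟩, rfl⟩
    rcases mem_singleton_iff.1 hs with rfl
    exact ⟨l, mem_univ _, rfl⟩
  have hline2 : Tmap w α '' ((univ : Set ℝ) ×ˢ {(1:ℝ)})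
      ⊆ (fun t : ℝ => (0 : ℝ × ℝ) + t • w) '' univ := by
    rintro _ ⟨⟨s, l⟩, ⟨-, hl⟩, rfl⟩
    rcases mem_singleton_iff.1 hl with rfl
    exact ⟨s, mem_univ _, by simp [Tmap]⟩
  have hnull : volume (Tmap w α '' (Icc 0 1 ×ˢ Ici 1) \ Tmap w α '' (Ioo 0 1 ×ˢ Ioi 1)) = 0 := by
    refine measure_mono_null (subset_trans (Set.subset_image_diff _ _ _)
      (image_mono hbad)) ?_
    rw [image_union, image_union]
    refine measure_union_null (measure_union_null ?_ ?_) ?_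
    · exact measure_mono_null (hline1 0) (line_null _ _ _)
    · exact measure_mono_null (hline1 1) (line_null _ _ _)
    · exact measure_mono_null hline2 (line_null _ _ _)
  have haeeq : Tmap w α '' (Icc 0 1 ×ˢ Ici 1) =ᵐ[volume] Tmap w α '' (Ioo 0 1 ×ˢ Ioi 1) :=
    ae_eq_set.2 ⟨hnull, by rw [diff_eq_empty.2 himg]; exact measure_empty⟩
  rw [setLIntegral_congr haeeq]
  have hS : MeasurableSet (Ioo (0:ℝ) 1 ×ˢ Ioi (1:ℝ)) :=
    measurableSet_Ioo.prod measurableSet_Ioi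
  rw [lintegral_image_eq_lintegral_abs_det_fderiv_mul volume hS
    (fun q _ => (hasFDerivAt_Tmap w α q).hasFDerivWithinAt)
    (Tmap_injOn w α hw hα.ne') G]
  refine setLIntegral_congr_fun hS ?_
  rintro ⟨s, l⟩ ⟨-, hl⟩
  dsimp only
  rw [Dmap_det, abs_neg, abs_of_pos (mul_pos (lt_trans zero_lt_one (mem_Ioi.1 hl)) hα)]

/-! ### The `K`-integral -/

lemma Kval (g : ℝ → ℝ≥0∞) (hg : Measurable g) {r l : ℝ} (φ : ℝ) (hr : 0 < r) (hl : 0 < l) :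
    ∫⁻ a : ℝ × ℝ, ENNReal.ofReal (l * crs (r * Real.cos φ, r * Real.sin φ) a)
        * g (l * nrm a)
      = 2 * ENNReal.ofReal (r * l⁻¹ * l⁻¹) * Ig g := by
  rw [lintegral_polar]
  have hTgt : MeasurableSet (Set.Ioi (0:ℝ) ×ˢ Set.Ioo (-π) π) :=
    measurableSet_Ioi.prod measurableSet_Ioo
  have hptwise : ∀ q ∈ Set.Ioi (0:ℝ) ×ˢ Set.Ioo (-π) π,
      ENNReal.ofReal q.1 * (ENNReal.ofReal (l * crs (r * Real.cos φ, r * Real.sin φ)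
          (q.1 * Real.cos q.2, q.1 * Real.sin q.2))
            * g (l * nrm (q.1 * Real.cos q.2, q.1 * Real.sin q.2)))
        = (ENNReal.ofReal q.1 * ENNReal.ofReal (l * r * q.1) * g (l * q.1))
            * ENNReal.ofReal (Real.sin (q.2 - φ)) := by
    rintro ⟨ρ, θ⟩ ⟨hρ, -⟩
    have hρ' : (0:ℝ) < ρ := mem_Ioi.1 hρ
    have h1 : crs (r * Real.cos φ, r * Real.sin φ) (ρ * Real.cos θ, ρ * Real.sin θ)
        = (r * ρ) * Real.sin (θ - φ) := by
      simp only [crs, Real.sin_sub]; ring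
    have h2 : nrm (ρ * Real.cos θ, ρ * Real.sin θ) = ρ := by
      rw [nrm_polar, abs_of_pos hρ']
    rw [h1, h2]
    rw [show l * ((r * ρ) * Real.sin (θ - φ)) = (l * r * ρ) * Real.sin (θ - φ) by ring]
    rw [ENNReal.ofReal_mul (by positivity)]
    ring
  rw [setLIntegral_congr_fun hTgt hptwise]
  rw [Measure.volume_eq_prod, ← Measure.prod_restrict]
  have hfm : Measurable (fun ρ : ℝ => ENNReal.ofReal ρ * ENNReal.ofReal (l * r * ρ) * g (l * ρ)) :=
    ((measurable_id.ennreal_ofReal).mul ((measurable_const_mul (l*r)).ennreal_ofReal)).mul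
      (hg.comp (measurable_const_mul l))
  have hgm : Measurable (fun θ : ℝ => ENNReal.ofReal (Real.sin (θ - φ))) :=
    (Real.measurable_sin.comp (measurable_id.sub measurable_const)).ennreal_ofReal
  rw [lintegral_prod_mul (f := fun ρ : ℝ => ENNReal.ofReal ρ * ENNReal.ofReal (l * r * ρ) * g (l * ρ))
    (g := fun θ : ℝ => ENNReal.ofReal (Real.sin (θ - φ))) hfm.aemeasurable hgm.aemeasurable]
  rw [lintegral_sin_shift]
  have hsub : ∀ ρ ∈ Ioi (0:ℝ),
      ENNReal.ofReal ρ * ENNReal.ofReal (l * r * ρ) * g (l * ρ)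
        = (fun t => ENNReal.ofReal (l⁻¹ * t) * ENNReal.ofReal (r * t) * g t) (l * ρ) := by
    intro ρ hρ
    simp only
    rw [show l⁻¹ * (l * ρ) = ρ by field_simp, show r * (l * ρ) = l * r * ρ by ring]
  rw [setLIntegral_congr_fun measurableSet_Ioi hsub]
  rw [lintegral_Ioi_scale hl (fun t => ENNReal.ofReal (l⁻¹ * t) * ENNReal.ofReal (r * t) * g t)]
  have hsub2 : ∀ t ∈ Ioi (0:ℝ),
      ENNReal.ofReal (l⁻¹ * t) * ENNReal.ofReal (r * t) * g t
        = ENNReal.ofReal (l⁻¹ * r) * (ENNReal.ofReal (t ^ 2) * g t) := by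
    intro t ht
    have ht' : (0:ℝ) < t := mem_Ioi.1 ht
    rw [← ENNReal.ofReal_mul (by positivity),
      show l⁻¹ * t * (r * t) = (l⁻¹ * r) * t ^ 2 by ring,
      ENNReal.ofReal_mul (by positivity), mul_assoc]
  rw [setLIntegral_congr_fun measurableSet_Ioi hsub2]
  rw [lintegral_const_mul' _ _ ENNReal.ofReal_ne_top]
  rw [show (∫⁻ t in Ioi (0:ℝ), ENNReal.ofReal (t ^ 2) * g t) = Ig g from rfl]
  rw [← mul_assoc, ← ENNReal.ofReal_mul (by positivity)]
  rw [show l⁻¹ * (l⁻¹ * r) = r * l⁻¹ * l⁻¹ by ring]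
  ring

/-! ### The full inner double integral -/

lemma Fval (g : ℝ → ℝ≥0∞) (hg : Measurable g) {r : ℝ} (φ : ℝ) (hr : 0 < r) :
    ∫⁻ α in {α : ℝ × ℝ | 0 < crs (r * Real.cos φ, r * Real.sin φ) α},
      ∫⁻ β in {β | (segment ℝ α β
          ∩ segment ℝ 0 ((r * Real.cos φ, r * Real.sin φ) : ℝ × ℝ)).Nonempty},
        g (nrm (α - β))
      = 2 * ENNReal.ofReal r * Ig g := by
  set w : ℝ × ℝ := (r * Real.cos φ, r * Real.sin φ) with hw_def
  have hw : w ≠ 0 := by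
    intro h
    have : nrm w = 0 := by rw [h]; simp [nrm]
    rw [hw_def, nrm_polar, abs_of_pos hr] at this
    exact hr.ne' this
  have hHP : MeasurableSet {α : ℝ × ℝ | 0 < crs w α} :=
    measurableSet_lt measurable_const (continuous_crs w).measurable
  set S : Set (ℝ × ℝ) := Ioo (0:ℝ) 1 ×ˢ Ioi (1:ℝ) with hS_def
  have hSmeas : MeasurableSet S := measurableSet_Ioo.prod measurableSet_Ioi
  set h : (ℝ × ℝ) → (ℝ × ℝ) → ℝ≥0∞ := fun α q =>
    ENNReal.ofReal (q.2 * crs w α) * g (q.2 * nrm (q.1 • w - α)) with hh_def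
  -- Step 1
  have step1 : ∀ α ∈ {α : ℝ × ℝ | 0 < crs w α},
      (∫⁻ β in {β | (segment ℝ α β ∩ segment ℝ 0 w).Nonempty}, g (nrm (α - β)))
        = ∫⁻ q in S, h α q := by
    intro α hα
    rw [binteg w α hw hα (fun β => g (nrm (α - β)))]
    refine setLIntegral_congr_fun hSmeas ?_
    rintro ⟨s, l⟩ ⟨-, hl⟩
    have hl0 : (0:ℝ) < l := lt_trans zero_lt_one (mem_Ioi.1 hl)
    have : α - Tmap w α (s, l) = -(l • (s • w - α)) := by
      simp only [Tmap]; abel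
    simp only [hh_def, this, nrm_neg, nrm_smul, abs_of_pos hl0]
  rw [setLIntegral_congr_fun hHP step1]
  -- Step 2: extend to the whole space
  have step2 : (∫⁻ α in {α : ℝ × ℝ | 0 < crs w α}, ∫⁻ q in S, h α q)
      = ∫⁻ α, ∫⁻ q in S, h α q := by
    have hz : ∀ α ∈ {α : ℝ × ℝ | 0 < crs w α}ᶜ, (∫⁻ q in S, h α q) = 0 := by
      intro α hα
      have hα' : crs w α ≤ 0 := not_lt.1 hα
      have : ∀ q ∈ S, h α q = 0 := by
        rintro ⟨s, l⟩ ⟨-, hl⟩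
        have hl0 : (0:ℝ) ≤ l := le_of_lt (lt_trans zero_lt_one (mem_Ioi.1 hl))
        simp only [hh_def]
        rw [ENNReal.ofReal_of_nonpos (mul_nonpos_iff.2 (Or.inl ⟨hl0, hα'⟩)), zero_mul]
      rw [setLIntegral_congr_fun hSmeas this, lintegral_zero]
    have hcz : (∫⁻ α in {α : ℝ × ℝ | 0 < crs w α}ᶜ, ∫⁻ q in S, h α q) = 0 := by
      rw [setLIntegral_congr_fun hHP.compl hz, lintegral_zero]
    conv_rhs => rw [← lintegral_add_compl (fun α => ∫⁻ q in S, h α q) hHP]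
    rw [hcz, add_zero]
  rw [step2]
  -- Step 3: swap the integrals
  have hmeas : AEMeasurable (Function.uncurry h) (volume.prod (volume.restrict S)) := by
    refine Measurable.aemeasurable ?_
    have h1 : Measurable fun p : (ℝ × ℝ) × (ℝ × ℝ) => p.2.2 * crs w p.1 :=
      measurable_snd.snd.mul ((continuous_crs w).measurable.comp measurable_fst)
    have h2 : Measurable fun p : (ℝ × ℝ) × (ℝ × ℝ) => p.2.2 * nrm (p.2.1 • w - p.1) := by
      have : Continuous fun p : (ℝ × ℝ) × (ℝ × ℝ) => nrm (p.2.1 • w - p.1) :=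
        continuous_nrm.comp ((continuous_snd.fst.smul continuous_const).sub continuous_fst)
      exact measurable_snd.snd.mul this.measurable
    exact (h1.ennreal_ofReal).mul (hg.comp h2)
  rw [lintegral_lintegral_swap hmeas]
  -- Step 4: translation + Kval
  have step4 : ∀ q ∈ S, (∫⁻ α, h α q) = 2 * ENNReal.ofReal (r * q.2⁻¹ * q.2⁻¹) * Ig g := by
    rintro ⟨s, l⟩ ⟨-, hl⟩
    have hl0 : (0:ℝ) < l := lt_trans zero_lt_one (mem_Ioi.1 hl)
    have htrans : ∫⁻ α, h α (s, l) = ∫⁻ α, h (α + s • w) (s, l) :=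
      (lintegral_add_right_eq_self (fun α => h α (s, l)) (s • w)).symm
    rw [htrans]
    have hpt : ∀ α : ℝ × ℝ, h (α + s • w) (s, l)
        = ENNReal.ofReal (l * crs w α) * g (l * nrm α) := by
      intro α
      simp only [hh_def]
      rw [crs_add, crs_smul, crs_self, mul_zero, add_zero,
        show s • w - (α + s • w) = -α by abel, nrm_neg]
    simp only [hpt]
    exact Kval g hg φ hr hl0
  rw [setLIntegral_congr_fun hSmeas step4]
  -- Step 5
  have step5 : ∀ q ∈ S, 2 * ENNReal.ofReal (r * q.2⁻¹ * q.2⁻¹) * Ig g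
      = (fun s : ℝ => (1:ℝ≥0∞)) q.1
        * (fun l : ℝ => 2 * ENNReal.ofReal r * Ig g * ENNReal.ofReal ((l ^ 2)⁻¹)) q.2 := by
    rintro ⟨s, l⟩ ⟨-, hl⟩
    have hl0 : (0:ℝ) < l := lt_trans zero_lt_one (mem_Ioi.1 hl)
    simp only [one_mul]
    rw [show r * l⁻¹ * l⁻¹ = r * (l ^ 2)⁻¹ by rw [pow_two, mul_inv]; ring,
      ENNReal.ofReal_mul hr.le]
    ring
  rw [setLIntegral_congr_fun hSmeas step5]
  rw [hS_def, Measure.volume_eq_prod, ← Measure.prod_restrict]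
  have hgm2 : Measurable fun l : ℝ => 2 * ENNReal.ofReal r * Ig g * ENNReal.ofReal ((l ^ 2)⁻¹) :=
    ((((continuous_pow 2).measurable.inv).ennreal_ofReal).const_mul _)
  rw [lintegral_prod_mul (f := fun _ : ℝ => (1:ℝ≥0∞))
    (g := fun l : ℝ => 2 * ENNReal.ofReal r * Ig g * ENNReal.ofReal ((l ^ 2)⁻¹))
    measurable_const.aemeasurable hgm2.aemeasurable]
  rw [lintegral_one, Measure.restrict_apply_univ, Real.volume_Ioo,
    lintegral_const_mul _ (show Measurable fun y : ℝ => ENNReal.ofReal ((y ^ 2)⁻¹) from (continuous_pow 2).measurable.inv.ennreal_ofReal),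
    lintegral_inv_sq_Ioi_one]
  simp

/-! ### The main theorem over `ℝ × ℝ` -/

theorem mainV (g : ℝ → ℝ≥0∞) (hg : Measurable g) :
    ∫⁻ w : ℝ × ℝ, g (nrm w) * (∫⁻ α in {α : ℝ × ℝ | 0 < crs w α},
        ∫⁻ β in {β | (segment ℝ α β ∩ segment ℝ 0 w).Nonempty}, g (nrm (α - β)))
      = ENNReal.ofReal (4 * π) * (Ig g) ^ 2 := by
  rw [lintegral_polar (fun w => g (nrm w) * _)]
  have hTgt : MeasurableSet (Set.Ioi (0:ℝ) ×ˢ Set.Ioo (-π) π) :=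
    measurableSet_Ioi.prod measurableSet_Ioo
  have hpt : ∀ q ∈ Set.Ioi (0:ℝ) ×ˢ Set.Ioo (-π) π,
      ENNReal.ofReal q.1 * (g (nrm (q.1 * Real.cos q.2, q.1 * Real.sin q.2)) *
          (∫⁻ α in {α : ℝ × ℝ | 0 < crs (q.1 * Real.cos q.2, q.1 * Real.sin q.2) α},
            ∫⁻ β in {β | (segment ℝ α β ∩
                segment ℝ 0 ((q.1 * Real.cos q.2, q.1 * Real.sin q.2) : ℝ × ℝ)).Nonempty},
              g (nrm (α - β))))
        = (fun ρ : ℝ => 2 * Ig g * (ENNReal.ofReal (ρ ^ 2) * g ρ)) q.1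
            * (fun _ : ℝ => (1:ℝ≥0∞)) q.2 := by
    rintro ⟨ρ, θ⟩ ⟨hρ, -⟩
    have hρ' : (0:ℝ) < ρ := mem_Ioi.1 hρ
    rw [Fval g hg θ hρ', nrm_polar, abs_of_pos hρ']
    simp only [mul_one]
    rw [pow_two, ENNReal.ofReal_mul hρ'.le]
    ring
  rw [setLIntegral_congr_fun hTgt hpt]
  rw [Measure.volume_eq_prod, ← Measure.prod_restrict]
  have hfm : Measurable fun ρ : ℝ => 2 * Ig g * (ENNReal.ofReal (ρ ^ 2) * g ρ) :=
    (((continuous_pow 2).measurable.ennreal_ofReal.mul hg).const_mul _)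
  rw [lintegral_prod_mul (f := fun ρ : ℝ => 2 * Ig g * (ENNReal.ofReal (ρ ^ 2) * g ρ))
    (g := fun _ : ℝ => (1:ℝ≥0∞)) hfm.aemeasurable measurable_const.aemeasurable]
  rw [lintegral_one, Measure.restrict_apply_univ, Real.volume_Ioo]
  rw [lintegral_const_mul _ (show Measurable fun x : ℝ => ENNReal.ofReal (x ^ 2) * g x from (continuous_pow 2).measurable.ennreal_ofReal.mul hg)]
  rw [show (∫⁻ t in Ioi (0:ℝ), ENNReal.ofReal (t ^ 2) * g t) = Ig g from rfl]
  rw [show π - -π = 2 * π by ring]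
  rw [show (2:ℝ≥0∞) = ENNReal.ofReal 2 by simp]
  rw [show ENNReal.ofReal 2 * Ig g * Ig g * ENNReal.ofReal (2 * π)
      = (ENNReal.ofReal 2 * ENNReal.ofReal (2 * π)) * (Ig g * Ig g) by ring]
  rw [← ENNReal.ofReal_mul (by norm_num), show (2:ℝ) * (2 * π) = 4 * π by ring, pow_two]

/-! ### Transfer from `EuclideanSpace ℝ (Fin 2)` -/

def Emv : EuclideanSpace ℝ (Fin 2) ≃ᵐ ℝ × ℝ :=
  (MeasurableEquiv.toLp 2 (Fin 2 → ℝ)).symm.trans MeasurableEquiv.finTwoArrow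

lemma Emv_mp : MeasurePreserving Emv :=
  (volume_preserving_finTwoArrow ℝ).comp
    (EuclideanSpace.volume_preserving_symm_measurableEquiv_toLp (Fin 2))

lemma Emv_symm_add (u v : ℝ × ℝ) : Emv.symm (u + v) = Emv.symm u + Emv.symm v := by
  ext i
  have : (Emv.symm u + Emv.symm v) i = (Emv.symm u) i + (Emv.symm v) i := rfl
  rw [this]
  fin_cases i <;> rfl

lemma Emv_symm_smul (c : ℝ) (v : ℝ × ℝ) : Emv.symm (c • v) = c • Emv.symm v := by
  ext i
  have : (c • Emv.symm v) i = c * (Emv.symm v) i := rfl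
  rw [this]
  fin_cases i <;> rfl

lemma Emv_symm_sub (u v : ℝ × ℝ) : Emv.symm (u - v) = Emv.symm u - Emv.symm v := by
  ext i
  have : (Emv.symm u - Emv.symm v) i = (Emv.symm u) i - (Emv.symm v) i := rfl
  rw [this]
  fin_cases i <;> rfl

lemma Emv_symm_zero : Emv.symm 0 = 0 := by
  ext i
  fin_cases i <;> rfl

lemma Emv_symm_norm (v : ℝ × ℝ) : ‖Emv.symm v‖ = nrm v := by
  rw [EuclideanSpace.norm_eq, Fin.sum_univ_two]
  show Real.sqrt (‖v.1‖ ^ 2 + ‖v.2‖ ^ 2) = _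
  rw [Real.norm_eq_abs, Real.norm_eq_abs, sq_abs, sq_abs]
  rfl

lemma Emv_symm_dist (u v : ℝ × ℝ) : dist (Emv.symm u) (Emv.symm v) = nrm (u - v) := by
  rw [dist_eq_norm, ← Emv_symm_sub, Emv_symm_norm]

def psiL : (ℝ × ℝ) →ₗ[ℝ] EuclideanSpace ℝ (Fin 2) where
  toFun := Emv.symm
  map_add' := Emv_symm_add
  map_smul' := Emv_symm_smul

lemma Emv_symm_segment (u v : ℝ × ℝ) :
    segment ℝ (Emv.symm u) (Emv.symm v) = Emv.symm '' segment ℝ u v :=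
  (image_segment ℝ psiL.toAffineMap u v).symm

lemma Emv_symm_Hplus (v : ℝ × ℝ) :
    Emv.symm ⁻¹' (Hplus 0 (Emv.symm v)) = {α : ℝ × ℝ | 0 < crs v α} := by
  ext α
  show (0:ℝ) < ((Emv.symm v) 0 - (0 : EuclideanSpace ℝ (Fin 2)) 0)
      * ((Emv.symm α) 1 - (0 : EuclideanSpace ℝ (Fin 2)) 1)
    - ((Emv.symm v) 1 - (0 : EuclideanSpace ℝ (Fin 2)) 1)
      * ((Emv.symm α) 0 - (0 : EuclideanSpace ℝ (Fin 2)) 0) ↔ 0 < crs v α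
  have h0 : ∀ i : Fin 2, (0 : EuclideanSpace ℝ (Fin 2)) i = 0 := fun i => rfl
  rw [h0, h0]
  show (0:ℝ) < (v.1 - 0) * (α.2 - 0) - (v.2 - 0) * (α.1 - 0) ↔ _
  simp [crs]

lemma Emv_symm_crossSet (α v : ℝ × ℝ) :
    Emv.symm ⁻¹' {b : EuclideanSpace ℝ (Fin 2) |
        (segment ℝ (Emv.symm α) b ∩ segment ℝ 0 (Emv.symm v)).Nonempty}
      = {β : ℝ × ℝ | (segment ℝ α β ∩ segment ℝ 0 v).Nonempty} := by
  ext β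
  simp only [mem_preimage, mem_setOf_eq]
  rw [← Emv_symm_zero, Emv_symm_segment, Emv_symm_segment,
    ← Set.image_inter Emv.symm.injective]
  exact Set.image_nonempty

end Stmt1Aux

end StmtAux

/-- For every measurable `g : [0,∞) → [0,∞]`,
`∫_{y ∈ ℝ²} g(|y|) ( ∫_{a ∈ H⁺(0,y)} ∫_{b : [a,b] ∩ [0,y] ≠ ∅} g(|a−b|) db da ) dy
  = 4π ( ∫_0^∞ r² g(r) dr )²`. -/
theorem stmt1 (g : ℝ → ℝ≥0∞) (hg : Measurable g) :
    ∫⁻ y : EuclideanSpace ℝ (Fin 2),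
      g ‖y‖ *
        ∫⁻ a in Hplus 0 y,
          ∫⁻ b in {b : EuclideanSpace ℝ (Fin 2) |
              (segment ℝ a b ∩ segment ℝ 0 y).Nonempty},
            g (dist a b) =
      ENNReal.ofReal (4 * π) *
        (∫⁻ r in Set.Ioi (0 : ℝ), ENNReal.ofReal (r ^ 2) * g r) ^ 2 := by
  open Stmt1Aux in
  calc
    ∫⁻ y : EuclideanSpace ℝ (Fin 2), g ‖y‖ *
        ∫⁻ a in Hplus 0 y, ∫⁻ b in {b : EuclideanSpace ℝ (Fin 2) |
            (segment ℝ a b ∩ segment ℝ 0 y).Nonempty}, g (dist a b)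
      = ∫⁻ v : ℝ × ℝ, g ‖Emv.symm v‖ *
          ∫⁻ a in Hplus 0 (Emv.symm v), ∫⁻ b in {b : EuclideanSpace ℝ (Fin 2) |
              (segment ℝ a b ∩ segment ℝ 0 (Emv.symm v)).Nonempty}, g (dist a b) := by
        exact ((Emv_mp.symm Emv).lintegral_comp_emb
          Emv.symm.measurableEmbedding _).symm
    _ = ∫⁻ w : ℝ × ℝ, g (nrm w) * (∫⁻ α in {α : ℝ × ℝ | 0 < crs w α},
          ∫⁻ β in {β | (segment ℝ α β ∩ segment ℝ 0 w).Nonempty}, g (nrm (α - β))) := by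
        refine lintegral_congr fun v => ?_
        rw [Emv_symm_norm]
        congr 1
        calc
          ∫⁻ a in Hplus 0 (Emv.symm v), ∫⁻ b in {b : EuclideanSpace ℝ (Fin 2) |
              (segment ℝ a b ∩ segment ℝ 0 (Emv.symm v)).Nonempty}, g (dist a b)
            = ∫⁻ α in Emv.symm ⁻¹' (Hplus 0 (Emv.symm v)),
                ∫⁻ b in {b : EuclideanSpace ℝ (Fin 2) |
                  (segment ℝ (Emv.symm α) b ∩ segment ℝ 0 (Emv.symm v)).Nonempty},
                    g (dist (Emv.symm α) b) := by
              exact ((Emv_mp.symm Emv).setLIntegral_comp_preimage_emb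
                Emv.symm.measurableEmbedding _ _).symm
          _ = ∫⁻ α in {α : ℝ × ℝ | 0 < crs v α},
                ∫⁻ β in {β : ℝ × ℝ | (segment ℝ α β ∩ segment ℝ 0 v).Nonempty},
                  g (nrm (α - β)) := by
              rw [Emv_symm_Hplus]
              refine lintegral_congr fun α => ?_
              calc
                ∫⁻ b in {b : EuclideanSpace ℝ (Fin 2) |
                    (segment ℝ (Emv.symm α) b ∩ segment ℝ 0 (Emv.symm v)).Nonempty},
                      g (dist (Emv.symm α) b)
                  = ∫⁻ β in Emv.symm ⁻¹' {b : EuclideanSpace ℝ (Fin 2) |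
                      (segment ℝ (Emv.symm α) b ∩ segment ℝ 0 (Emv.symm v)).Nonempty},
                        g (dist (Emv.symm α) (Emv.symm β)) := by
                    exact ((Emv_mp.symm Emv).setLIntegral_comp_preimage_emb
                      Emv.symm.measurableEmbedding _ _).symm
                _ = _ := by
                    rw [Emv_symm_crossSet]
                    exact lintegral_congr fun β => by rw [Emv_symm_dist]
    _ = ENNReal.ofReal (4 * π) *
        (∫⁻ r in Set.Ioi (0 : ℝ), ENNReal.ofReal (r ^ 2) * g r) ^ 2 := mainV g hg
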